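/- Let ε with 0 < ε < 1/2, let F be a finite family of finite sets with |F| ≥ 2 that is (1−ε)-approximate union closed, and let A, B be independent uniformly random elements of F. Then the Shannon entropy of the union satisfies H(A ∪ B) ≤ 2ε·log₂(1/ε) + (1 + 2ε)·log₂|F|. -/

import Mathlib

open scoped Classical in
/-- Probability of an event `E` under the probability mass function `μ`
on a finite sample space. -/
noncomputable def probOf {Ω : Type*} [Fintype Ω] (μ : Ω → ℝ) (E : Ω → Prop) : ℝ :=
  ∑ ω, if E ω then μ ω else 0

/-- Shannon entropy (base 2) of a random variable `X` taking finitely many values, under the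
probability mass function `μ`; the sum ranges over the image of `X`
(note `Real.logb 2 0 = 0` by convention). -/
noncomputable def entropy {Ω V : Type*} [Fintype Ω] [DecidableEq V]
    (μ : Ω → ℝ) (X : Ω → V) : ℝ :=
  ∑ v ∈ Finset.image X Finset.univ,
    -(probOf μ (fun ω => X ω = v) * Real.logb 2 (probOf μ (fun ω => X ω = v)))

/-- A finite family `F` is `c`-approximate union closed if at least a `c`-fraction of the
ordered pairs `(A, B) ∈ F × F` satisfy `A ∪ B ∈ F`. -/
def ApproxUnionClosed {α : Type*} [DecidableEq α] (F : Finset (Finset α)) (c : ℝ) : Prop :=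
  ((((F ×ˢ F).filter fun p => p.1 ∪ p.2 ∈ F).card : ℝ)) ≥ c * ((F.card : ℝ) * (F.card : ℝ))

section helpers
variable {Ω : Type*} [Fintype Ω] (μ : Ω → ℝ)

lemma my_probOf_nonneg (hμ0 : ∀ ω, 0 ≤ μ ω) (E : Ω → Prop) : 0 ≤ probOf μ E := by
  unfold probOf
  refine Finset.sum_nonneg fun ω _ => ?_
  split
  · exact hμ0 ω
  · exact le_rfl

lemma my_probOf_congr (E E' : Ω → Prop) (h : ∀ ω, E ω ↔ E' ω) :
    probOf μ E = probOf μ E' := by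
  unfold probOf
  refine Finset.sum_congr rfl fun ω _ => ?_
  by_cases hE : E ω
  · rw [if_pos hE, if_pos ((h ω).1 hE)]
  · rw [if_neg hE, if_neg (fun hE' => hE ((h ω).2 hE'))]

lemma my_probOf_sum_eq {ι : Type*} (s : Finset ι) (g : Ω → ι) (hg : ∀ ω, g ω ∈ s) :
    ∑ v ∈ s, probOf μ (fun ω => g ω = v) = ∑ ω, μ ω := by
  unfold probOf
  rw [Finset.sum_comm]
  refine Finset.sum_congr rfl fun ω _ => ?_
  rw [Finset.sum_eq_single_of_mem (g ω) (hg ω)]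
  · exact if_pos rfl
  · intro v _ hne
    exact if_neg fun h : g ω = v => hne h.symm

lemma my_probOf_filter_sum {ι : Type*} (s : Finset ι) (g : Ω → ι) (hg : ∀ ω, g ω ∈ s)
    (P : ι → Prop) [DecidablePred P] :
    ∑ v ∈ s.filter P, probOf μ (fun ω => g ω = v) = probOf μ (fun ω => P (g ω)) := by
  unfold probOf
  rw [Finset.sum_comm]
  refine Finset.sum_congr rfl fun ω _ => ?_
  by_cases hP : P (g ω)
  · rw [if_pos hP, Finset.sum_eq_single_of_mem (g ω) (Finset.mem_filter.2 ⟨hg ω, hP⟩)]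
    · exact if_pos rfl
    · intro v _ hne
      exact if_neg fun h : g ω = v => hne h.symm
  · rw [if_neg hP, Finset.sum_eq_zero]
    intro v hv
    refine if_neg fun h : g ω = v => ?_
    exact hP (h ▸ (Finset.mem_filter.1 hv).2)

lemma my_probOf_pair_sum {β γ : Type*} (A : Ω → β) (B : Ω → γ) (s : Finset (β × γ)) :
    ∑ pr ∈ s, probOf μ (fun ω => A ω = pr.1 ∧ B ω = pr.2)
      = probOf μ (fun ω => (A ω, B ω) ∈ s) := by
  unfold probOf
  rw [Finset.sum_comm]
  refine Finset.sum_congr rfl fun ω _ => ?_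
  by_cases h : (A ω, B ω) ∈ s
  · rw [if_pos h, Finset.sum_eq_single_of_mem (A ω, B ω) h]
    · exact if_pos ⟨rfl, rfl⟩
    · intro pr _ hne
      refine if_neg fun hh : A ω = pr.1 ∧ B ω = pr.2 => hne ?_
      exact (Prod.ext_iff.mpr ⟨hh.1, hh.2⟩ : (A ω, B ω) = pr).symm
  · rw [if_neg h, Finset.sum_eq_zero]
    intro pr hpr
    refine if_neg fun hh : A ω = pr.1 ∧ B ω = pr.2 => h ?_
    exact (Prod.ext_iff.mpr ⟨hh.1, hh.2⟩ : (A ω, B ω) = pr) ▸ hpr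

lemma my_probOf_add_not (E : Ω → Prop) :
    probOf μ E + probOf μ (fun ω => ¬ E ω) = ∑ ω, μ ω := by
  unfold probOf
  rw [← Finset.sum_add_distrib]
  refine Finset.sum_congr rfl fun ω _ => ?_
  by_cases h : E ω
  · rw [if_pos h, if_neg (not_not_intro h)]; ring
  · rw [if_neg h, if_pos h]; ring

lemma my_probOf_mono (hμ0 : ∀ ω, 0 ≤ μ ω) (E E' : Ω → Prop)
    (h : ∀ ω, μ ω ≠ 0 → E ω → E' ω) : probOf μ E ≤ probOf μ E' := by
  unfold probOf
  refine Finset.sum_le_sum fun ω _ => ?_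
  by_cases hμz : μ ω = 0
  · rw [hμz]
    split <;> split <;> simp
  · by_cases hE : E ω
    · rw [if_pos hE, if_pos (h ω hμz hE)]
    · rw [if_neg hE]
      split
      · exact hμ0 ω
      · exact le_rfl

lemma my_probOf_eq_zero (hμ0 : ∀ ω, 0 ≤ μ ω) (E : Ω → Prop)
    (h : probOf μ E = 0) : ∀ ω, μ ω ≠ 0 → ¬ E ω := by
  intro ω hω hE
  have h2 := (Finset.sum_eq_zero_iff_of_nonneg (fun ω _ => by
    split
    · exact hμ0 ω
    · exact le_rfl)).1 h ω (Finset.mem_univ ω)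
  rw [if_pos hE] at h2
  exact hω h2

lemma my_probOf_ne_zero (E : Ω → Prop) (h : probOf μ E ≠ 0) : ∃ ω, E ω ∧ μ ω ≠ 0 := by
  unfold probOf at h
  obtain ⟨ω, _, hω⟩ := Finset.exists_ne_zero_of_sum_ne_zero h
  by_cases hE : E ω
  · exact ⟨ω, hE, by rwa [if_pos hE] at hω⟩
  · rw [if_neg hE] at hω
    exact absurd rfl hω

end helpers

lemma my_sum_ite_eq {ι : Type*} (s : Finset ι) (b : ι) (r : ℝ)
    [∀ v, Decidable (b = v)] [Decidable (b ∈ s)] :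
    (∑ v ∈ s, if b = v then r else 0) = if b ∈ s then r else 0 := by
  by_cases hb : b ∈ s
  · rw [if_pos hb, Finset.sum_eq_single_of_mem b hb]
    · rw [if_pos rfl]
    · intro v hv hne; exact if_neg (fun h : b = v => hne (h.symm))
  · rw [if_neg hb, Finset.sum_eq_zero]
    intro v hv; exact if_neg (fun h : b = v => hb (h ▸ hv))

lemma my_negMulLog_le (p t : ℝ) (hp : 0 ≤ p) (ht : 0 < t) :
    Real.negMulLog p ≤ (t - p) + p * Real.log (1 / t) := by
  rcases eq_or_lt_of_le hp with h | h
  · simp only [← h, Real.negMulLog_zero, mul_zero, zero_mul, sub_zero, add_zero]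
    linarith
  · have h1 : Real.log (t / p) ≤ t / p - 1 := Real.log_le_sub_one_of_pos (by positivity)
    have h2 : p * Real.log (t / p) ≤ t - p := by
      calc p * Real.log (t / p) ≤ p * (t / p - 1) := by nlinarith
        _ = t - p := by field_simp
    have h3 : Real.negMulLog p = p * Real.log (t / p) + p * Real.log (1 / t) := by
      rw [Real.negMulLog, Real.log_div (ne_of_gt ht) (ne_of_gt h),
        Real.log_div one_ne_zero (ne_of_gt ht), Real.log_one]
      ring
    linarith

lemma my_jensen {ι : Type*} (s : Finset ι) (p : ι → ℝ) (hp : ∀ i ∈ s, 0 ≤ p i) :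
    ∑ i ∈ s, Real.negMulLog (p i) ≤
      (∑ i ∈ s, p i) * Real.log ((s.card : ℝ) / ∑ i ∈ s, p i) := by
  rcases eq_or_lt_of_le (Finset.sum_nonneg hp) with h0 | h0
  · have hall : ∀ i ∈ s, p i = 0 := (Finset.sum_eq_zero_iff_of_nonneg hp).1 h0.symm
    rw [Finset.sum_eq_zero (fun i hi => by rw [hall i hi, Real.negMulLog_zero]), ← h0]
    simp
  · set S := ∑ i ∈ s, p i with hS
    have hne : s.Nonempty := by
      by_contra h
      rw [Finset.not_nonempty_iff_eq_empty] at h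
      rw [hS, h, Finset.sum_empty] at h0; exact lt_irrefl _ h0
    have hcard : 0 < (s.card : ℝ) := by exact_mod_cast Finset.card_pos.2 hne
    set t := S / (s.card : ℝ) with hts
    have ht : 0 < t := div_pos h0 hcard
    calc ∑ i ∈ s, Real.negMulLog (p i)
        ≤ ∑ i ∈ s, ((t - p i) + p i * Real.log (1 / t)) :=
          Finset.sum_le_sum (fun i hi => my_negMulLog_le _ _ (hp i hi) ht)
      _ = ((s.card : ℝ) * t - S) + S * Real.log (1 / t) := by
          rw [Finset.sum_add_distrib, Finset.sum_sub_distrib, Finset.sum_const,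
            ← Finset.sum_mul, nsmul_eq_mul]
      _ = S * Real.log ((s.card : ℝ) / S) := by
          have h1 : (s.card : ℝ) * t = S := by rw [hts]; field_simp [hcard.ne']
          have h2 : 1 / t = (s.card : ℝ) / S := by rw [hts, one_div_div]
          rw [h1, h2]; ring



lemma my_final (ε q N : ℝ) (hε0 : 0 < ε) (hε : ε < 1/2) (hN : 2 ≤ N)
    (hq0 : 0 ≤ q) (hqε : q ≤ ε) :
    (1 - q) * Real.log (N / (1 - q)) + q * Real.log (N * N / q)
      ≤ 2*ε*Real.log (1/ε) + (1+2*ε)*Real.log N := by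
  have hN0 : 0 < N := by linarith
  have h1q : 0 < 1 - q := by linarith
  have hlogN : Real.log 2 ≤ Real.log N := Real.log_le_log (by norm_num) hN
  have hinv : (2:ℝ) ≤ 1/ε := by rw [le_div_iff₀ hε0]; linarith
  have hlogε : Real.log 2 ≤ Real.log (1/ε) := Real.log_le_log (by norm_num) hinv
  have hlog2pos : (0:ℝ) ≤ Real.log 2 := Real.log_nonneg (by norm_num)
  have hlogεpos : (0:ℝ) ≤ Real.log (1/ε) := le_trans hlog2pos hlogε
  have ht1 : (1-q) * Real.log (N/(1-q)) = (1-q) * Real.log N + Real.negMulLog (1-q) := by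
    rw [Real.log_div (ne_of_gt hN0) (ne_of_gt h1q), Real.negMulLog]; ring
  have ht2 : q * Real.log (N*N/q) = 2*q*Real.log N + Real.negMulLog q := by
    rcases eq_or_lt_of_le hq0 with h | h
    · rw [← h]; simp [Real.negMulLog]
    · rw [Real.log_div (by positivity) (ne_of_gt h),
        Real.log_mul (ne_of_gt hN0) (ne_of_gt hN0), Real.negMulLog]; ring
  have hb1 : Real.negMulLog (1-q) ≤ q := by
    have h1 : Real.log (1/(1-q)) ≤ 1/(1-q) - 1 := Real.log_le_sub_one_of_pos (by positivity)
    have h2 : Real.log (1/(1-q)) = - Real.log (1-q) := by rw [one_div, Real.log_inv]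
    have h3 : (1-q) * (1/(1-q) - 1) = q := by field_simp; ring
    have h4 := mul_le_mul_of_nonneg_left h1 h1q.le
    rw [h2, h3] at h4
    rw [Real.negMulLog]; nlinarith
  have hb2 : Real.negMulLog q ≤ (ε - q) + ε * Real.log (1/ε) := by
    rcases eq_or_lt_of_le hq0 with h | h
    · rw [← h, Real.negMulLog_zero]
      nlinarith
    · have h1 : Real.log (ε/q) ≤ ε/q - 1 := Real.log_le_sub_one_of_pos (by positivity)
      have h2 : Real.negMulLog q = q * Real.log (ε/q) + q * Real.log (1/ε) := by
        rw [Real.negMulLog, Real.log_div (ne_of_gt hε0) (ne_of_gt h),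
          Real.log_div one_ne_zero (ne_of_gt hε0), Real.log_one]; ring
      have h3 : q * Real.log (ε/q) ≤ ε - q := by
        have h5 := mul_le_mul_of_nonneg_left h1 h.le
        have h6 : q * (ε/q - 1) = ε - q := by field_simp
        linarith [h6 ▸ h5]
      have h4 : q * Real.log (1/ε) ≤ ε * Real.log (1/ε) :=
        mul_le_mul_of_nonneg_right hqε hlogεpos
      linarith
  have key : ε ≤ (2*ε - q) * Real.log N + ε * Real.log (1/ε) := by
    have h5 : ε * Real.log 2 ≤ (2*ε - q) * Real.log N :=
      mul_le_mul (by linarith) hlogN hlog2pos (by linarith)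
    have h6 : ε * Real.log 2 ≤ ε * Real.log (1/ε) :=
      mul_le_mul_of_nonneg_left hlogε hε0.le
    have h7 : (0.6931471803:ℝ) < Real.log 2 := Real.log_two_gt_d9
    nlinarith
  rw [ht1, ht2]
  nlinarith [hb1, hb2, key]


/-- If `F` is a `(1-ε)`-approximate union closed family with `|F| ≥ 2` (where `0 < ε < 1/2`)
and `A, B` are independent uniformly random elements of `F`, then
`H(A ∪ B) ≤ 2 ε log₂(1/ε) + (1 + 2ε) log₂ |F|`. -/
theorem entropy_union_upper {α : Type*} [DecidableEq α] {Ω : Type*} [Fintype Ω]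
    (ε : ℝ) (hε0 : 0 < ε) (hε : ε < 1 / 2)
    (F : Finset (Finset α)) (hF : 2 ≤ F.card)
    (hUC : ApproxUnionClosed F (1 - ε))
    (μ : Ω → ℝ) (hμ0 : ∀ ω, 0 ≤ μ ω) (hμ1 : ∑ ω, μ ω = 1)
    (A B : Ω → Finset α)
    (hunif : ∀ C ∈ F, ∀ D ∈ F,
      probOf μ (fun ω => A ω = C ∧ B ω = D) = 1 / ((F.card : ℝ) * (F.card : ℝ))) :
    entropy μ (fun ω => A ω ∪ B ω) ≤
      2 * ε * Real.logb 2 (1 / ε) + (1 + 2 * ε) * Real.logb 2 (F.card : ℝ) := by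
  classical
  have hn2 : (2:ℝ) ≤ (F.card:ℝ) := by exact_mod_cast hF
  have hnpos : (0:ℝ) < (F.card:ℝ) := by linarith
  set X : Ω → Finset α := fun ω => A ω ∪ B ω with hXdef
  set V : Finset (Finset α) := Finset.image X Finset.univ with hVdef
  set p : Finset α → ℝ := fun v => probOf μ (fun ω => X ω = v) with hpdef
  have hXV : ∀ ω, X ω ∈ V := fun ω => Finset.mem_image_of_mem X (Finset.mem_univ ω)
  have hpnonneg : ∀ v, 0 ≤ p v := fun v => my_probOf_nonneg μ hμ0 _
  have htot : ∑ v ∈ V, p v = 1 := by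
    simp only [hpdef]
    rw [my_probOf_sum_eq μ V X hXV, hμ1]
  have hpairsum : ∀ s : Finset (Finset α × Finset α), s ⊆ F ×ˢ F →
      probOf μ (fun ω => (A ω, B ω) ∈ s) = (s.card : ℝ) / ((F.card:ℝ) * (F.card:ℝ)) := by
    intro s hs
    rw [← my_probOf_pair_sum μ A B s]
    rw [Finset.sum_congr rfl (fun pr hpr => by
      have hm := Finset.mem_product.1 (hs hpr)
      exact hunif pr.1 hm.1 pr.2 hm.2)]
    rw [Finset.sum_const, nsmul_eq_mul, mul_one_div]
  have hG1 : probOf μ (fun ω => A ω ∈ F ∧ B ω ∈ F) = 1 := by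
    rw [← my_probOf_congr μ (fun ω => (A ω, B ω) ∈ F ×ˢ F)
      (fun ω => A ω ∈ F ∧ B ω ∈ F) (fun ω => Finset.mem_product)]
    rw [hpairsum (F ×ˢ F) (subset_refl _), Finset.card_product]
    push_cast
    field_simp
  have hμG : ∀ ω, μ ω ≠ 0 → A ω ∈ F ∧ B ω ∈ F := by
    intro ω hω
    by_contra hcon
    have h5 := my_probOf_add_not μ (fun ω => A ω ∈ F ∧ B ω ∈ F)
    rw [hG1, hμ1] at h5
    have h6 : probOf μ (fun ω => ¬(A ω ∈ F ∧ B ω ∈ F)) = 0 := by linarith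
    exact my_probOf_eq_zero μ hμ0 _ h6 ω hω hcon
  set V1 : Finset (Finset α) := V.filter (fun v => v ∈ F) with hV1def
  set V2 : Finset (Finset α) := V.filter (fun v => v ∉ F ∧ p v ≠ 0) with hV2def
  have hV2alt : V2 = (V.filter (fun v => v ∉ F)).filter (fun v => p v ≠ 0) := by
    rw [hV2def, Finset.filter_filter]
  have hsum_split : ∀ f : Finset α → ℝ, (∀ v, p v = 0 → f v = 0) →
      ∑ v ∈ V, f v = ∑ v ∈ V1, f v + ∑ v ∈ V2, f v := by
    intro f hf
    rw [hV1def, hV2alt, ← Finset.sum_filter_add_sum_filter_not V (fun v => v ∈ F) f]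
    congr 1
    rw [← Finset.sum_filter_add_sum_filter_not (V.filter (fun v => v ∉ F))
      (fun v => p v ≠ 0) f]
    have hz : ∑ v ∈ (V.filter (fun v => v ∉ F)).filter (fun v => ¬ p v ≠ 0), f v = 0 :=
      Finset.sum_eq_zero (fun v hv => hf v (not_not.1 (Finset.mem_filter.1 hv).2))
    rw [hz, add_zero]
  set s1 : ℝ := ∑ v ∈ V1, p v with hs1def
  set s2 : ℝ := ∑ v ∈ V2, p v with hs2def
  have hs1nonneg : 0 ≤ s1 := Finset.sum_nonneg (fun v _ => hpnonneg v)
  have hs2nonneg : 0 ≤ s2 := Finset.sum_nonneg (fun v _ => hpnonneg v)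
  have htot12 : s1 + s2 = 1 := by
    rw [hs1def, hs2def, ← hsum_split p (fun v h => h), htot]
  set bad : Finset (Finset α × Finset α) :=
    (F ×ˢ F).filter (fun pr => pr.1 ∪ pr.2 ∉ F) with hbaddef
  have hs2ε : s2 ≤ ε := by
    have hstep1 : s2 ≤ ∑ v ∈ V.filter (fun v => v ∉ F), p v := by
      rw [hs2def, hV2alt]
      exact Finset.sum_le_sum_of_subset_of_nonneg (Finset.filter_subset _ _)
        (fun v _ _ => hpnonneg v)
    have hstep2 : ∑ v ∈ V.filter (fun v => v ∉ F), p v = probOf μ (fun ω => X ω ∉ F) := by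
      simp only [hpdef]
      exact my_probOf_filter_sum μ V X hXV (fun v => v ∉ F)
    have hstep3 : probOf μ (fun ω => X ω ∉ F) ≤ probOf μ (fun ω => (A ω, B ω) ∈ bad) := by
      apply my_probOf_mono μ hμ0
      intro ω hω hX
      have hG := hμG ω hω
      exact Finset.mem_filter.2 ⟨Finset.mem_product.2 ⟨hG.1, hG.2⟩, hX⟩
    have hstep4 : probOf μ (fun ω => (A ω, B ω) ∈ bad)
        = (bad.card:ℝ) / ((F.card:ℝ) * (F.card:ℝ)) :=
      hpairsum bad (Finset.filter_subset _ _)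
    have hc : ((F ×ˢ F).filter (fun pr : Finset α × Finset α => pr.1 ∪ pr.2 ∈ F)).card
        + bad.card = F.card * F.card := by
      rw [hbaddef, ← Finset.card_product F F]
      exact Finset.card_filter_add_card_filter_not _
    have hUC' : (((F ×ˢ F).filter (fun pr : Finset α × Finset α => pr.1 ∪ pr.2 ∈ F)).card : ℝ)
        ≥ (1-ε) * ((F.card:ℝ) * (F.card:ℝ)) := hUC
    have hc' : (((F ×ˢ F).filter (fun pr : Finset α × Finset α => pr.1 ∪ pr.2 ∈ F)).card : ℝ)
        + (bad.card:ℝ) = (F.card:ℝ) * (F.card:ℝ) := by exact_mod_cast hc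
    calc s2 ≤ ∑ v ∈ V.filter (fun v => v ∉ F), p v := hstep1
      _ = probOf μ (fun ω => X ω ∉ F) := hstep2
      _ ≤ probOf μ (fun ω => (A ω, B ω) ∈ bad) := hstep3
      _ = (bad.card:ℝ) / ((F.card:ℝ) * (F.card:ℝ)) := hstep4
      _ ≤ ε := by
          rw [div_le_iff₀ (by positivity)]
          nlinarith
  have hs1pos : 0 < s1 := by linarith
  have hV1card : (V1.card:ℝ) ≤ (F.card:ℝ) := by
    exact_mod_cast Finset.card_le_card (fun v hv => (Finset.mem_filter.1 hv).2)
  have hV2card : (V2.card:ℝ) ≤ (F.card:ℝ) * (F.card:ℝ) := by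
    have hsub : V2 ⊆ Finset.image (fun pr : Finset α × Finset α => pr.1 ∪ pr.2) (F ×ˢ F) := by
      intro v hv
      obtain ⟨hvV, hvF, hpv⟩ := Finset.mem_filter.1 hv
      have hpv' : probOf μ (fun ω => X ω = v) ≠ 0 := hpv
      obtain ⟨ω, hXv, hω⟩ := my_probOf_ne_zero μ _ hpv'
      have hG := hμG ω hω
      exact Finset.mem_image.2 ⟨(A ω, B ω), Finset.mem_product.2 ⟨hG.1, hG.2⟩, hXv⟩
    have h1 : V2.card ≤ F.card * F.card := by
      calc V2.card ≤ _ := Finset.card_le_card hsub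
        _ ≤ (F ×ˢ F).card := Finset.card_image_le
        _ = F.card * F.card := Finset.card_product F F
    exact_mod_cast h1
  have hJ1 : ∑ v ∈ V1, Real.negMulLog (p v) ≤ s1 * Real.log ((F.card:ℝ) / s1) := by
    have hV1pos : 0 < (V1.card : ℝ) := by
      rcases Finset.eq_empty_or_nonempty V1 with h | h
      · exfalso
        rw [hs1def, h, Finset.sum_empty] at hs1pos
        exact lt_irrefl _ hs1pos
      · exact_mod_cast Finset.card_pos.2 h
    calc ∑ v ∈ V1, Real.negMulLog (p v)
        ≤ s1 * Real.log ((V1.card : ℝ) / s1) := my_jensen V1 p (fun v _ => hpnonneg v)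
      _ ≤ s1 * Real.log ((F.card:ℝ) / s1) := by
          apply mul_le_mul_of_nonneg_left _ hs1nonneg
          apply Real.log_le_log (div_pos hV1pos hs1pos)
          gcongr
  have hJ2 : ∑ v ∈ V2, Real.negMulLog (p v) ≤ s2 * Real.log ((F.card:ℝ) * (F.card:ℝ) / s2) := by
    rcases eq_or_lt_of_le hs2nonneg with h0 | h0
    · have hall : ∀ v ∈ V2, p v = 0 :=
        (Finset.sum_eq_zero_iff_of_nonneg (fun v _ => hpnonneg v)).1 h0.symm
      rw [Finset.sum_eq_zero (fun v hv => by rw [hall v hv, Real.negMulLog_zero]), ← h0]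
      simp
    · have hV2pos : 0 < (V2.card : ℝ) := by
        rcases Finset.eq_empty_or_nonempty V2 with h | h
        · exfalso
          rw [hs2def, h, Finset.sum_empty] at h0
          exact lt_irrefl _ h0
        · exact_mod_cast Finset.card_pos.2 h
      calc ∑ v ∈ V2, Real.negMulLog (p v)
          ≤ s2 * Real.log ((V2.card : ℝ) / s2) := my_jensen V2 p (fun v _ => hpnonneg v)
        _ ≤ s2 * Real.log ((F.card:ℝ) * (F.card:ℝ) / s2) := by
            apply mul_le_mul_of_nonneg_left _ hs2nonneg
            apply Real.log_le_log (div_pos hV2pos h0)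
            gcongr
  have hent : entropy μ X = (∑ v ∈ V, Real.negMulLog (p v)) / Real.log 2 := by
    have h1 : entropy μ X = ∑ v ∈ V, -(p v * Real.logb 2 (p v)) := rfl
    rw [h1, Finset.sum_div]
    refine Finset.sum_congr rfl (fun v _ => ?_)
    rw [Real.negMulLog, Real.logb]
    ring
  rw [hent]
  have hlog2 : (0:ℝ) < Real.log 2 := Real.log_pos (by norm_num)
  rw [div_le_iff₀ hlog2]
  have hrhs : (2 * ε * Real.logb 2 (1 / ε) + (1 + 2 * ε) * Real.logb 2 (F.card:ℝ)) * Real.log 2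
      = 2 * ε * Real.log (1 / ε) + (1 + 2 * ε) * Real.log (F.card:ℝ) := by
    simp only [Real.logb]
    field_simp
  rw [hrhs]
  have hs1eq : s1 = 1 - s2 := by linarith
  calc ∑ v ∈ V, Real.negMulLog (p v)
      = ∑ v ∈ V1, Real.negMulLog (p v) + ∑ v ∈ V2, Real.negMulLog (p v) :=
        hsum_split (fun v => Real.negMulLog (p v))
          (fun v h => by simp only [h, Real.negMulLog_zero])
    _ ≤ s1 * Real.log ((F.card:ℝ) / s1) + s2 * Real.log ((F.card:ℝ) * (F.card:ℝ) / s2) :=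
        add_le_add hJ1 hJ2
    _ = (1 - s2) * Real.log ((F.card:ℝ) / (1 - s2))
        + s2 * Real.log ((F.card:ℝ) * (F.card:ℝ) / s2) := by rw [← hs1eq]
    _ ≤ 2 * ε * Real.log (1 / ε) + (1 + 2 * ε) * Real.log (F.card:ℝ) :=
        my_final ε s2 (F.card:ℝ) hε0 hε hn2 hs2nonneg hs2ε
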